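/- If f ∈ ℝ[x,y] is a polynomial with at most t nonzero terms, then V(f(x, x+1)) ≤ 2t - 2, provided f is nonzero. -/

import Mathlib

open Polynomial

/-- Number of sign changes in the coefficient sequence, disregarding zeros. -/
noncomputable def signVar (p : Polynomial ℝ) : ℕ :=
  let l := (((List.range (p.natDegree + 1)).map fun i => p.coeff i).filter fun a => a ≠ 0)
  (l.zip l.tail).countP fun q => q.1 * q.2 < 0

/-- Substitution y = x + 1 into a bivariate polynomial. -/
noncomputable def subXX1 (f : MvPolynomial (Fin 2) ℝ) : Polynomial ℝ :=
  MvPolynomial.aeval ![Polynomial.X, Polynomial.X + 1] f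

/-- `T3 d h = (x+1)^d * h(-x/(x+1))` as a polynomial. -/
noncomputable def T3 (d : ℕ) (h : Polynomial ℝ) : Polynomial ℝ :=
  ∑ i ∈ Finset.range (d + 1),
    Polynomial.C (h.coeff i) * (-Polynomial.X) ^ i * (Polynomial.X + 1) ^ (d - i)

noncomputable def VI1 (h : Polynomial ℝ) : ℕ := signVar h
noncomputable def VI2 (h : Polynomial ℝ) : ℕ := signVar (h.comp (-1 - Polynomial.X))
noncomputable def VI3 (h : Polynomial ℝ) : ℕ := signVar (T3 h.natDegree h)


namespace SVaux

/-- adjacent sign-change count -/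
noncomputable def zc : List ℝ → ℕ
  | [] => 0
  | [_] => 0
  | a :: b :: l => (if a * b < 0 then 1 else 0) + zc (b :: l)

@[simp] lemma zc_nil : zc [] = 0 := rfl
@[simp] lemma zc_single (a : ℝ) : zc [a] = 0 := rfl
@[simp] lemma zc_cons_cons (a b : ℝ) (l : List ℝ) :
    zc (a :: b :: l) = (if a * b < 0 then 1 else 0) + zc (b :: l) := by
  rw [zc]

lemma zc_eq (l : List ℝ) :
    ((l.zip l.tail).countP fun q => q.1 * q.2 < 0) = zc l := by
  match l with
  | [] => simp
  | [a] => simp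
  | a :: b :: l =>
    have h2 := zc_eq (b :: l)
    simp only [List.tail, List.zip_cons_cons, List.countP_cons, zc_cons_cons] at h2 ⊢
    rw [h2]
    by_cases h : a * b < 0 <;> simp [h] <;> omega

noncomputable def F (l : List ℝ) : List ℝ := l.filter fun a => a ≠ 0

@[simp] lemma F_nil : F [] = [] := rfl
lemma F_cons_zero (l : List ℝ) : F ((0:ℝ) :: l) = F l := by simp [F]
lemma F_cons_ne (a : ℝ) (ha : a ≠ 0) (l : List ℝ) : F (a :: l) = a :: F l := by
  simp [F, List.filter_cons, ha]
lemma F_mem_ne (l : List ℝ) : ∀ x ∈ F l, x ≠ 0 := by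
  intro x hx; simpa [F] using (List.of_mem_filter hx)

noncomputable def sv (l : List ℝ) : ℕ := zc (F l)

/-- sign-change count with a leading virtual sign `s`, skipping zeros -/
noncomputable def W (s : ℝ) : List ℝ → ℕ
  | [] => 0
  | a :: l => if a = 0 then W s l else (if s * a < 0 then 1 else 0) + W a l

@[simp] lemma W_nil (s : ℝ) : W s [] = 0 := rfl
lemma W_cons (s a : ℝ) (l : List ℝ) :
    W s (a :: l) = if a = 0 then W s l else (if s * a < 0 then 1 else 0) + W a l := by
  rw [W]

lemma W_cons_zero (s : ℝ) (l : List ℝ) : W s ((0:ℝ) :: l) = W s l := by simp [W_cons]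
lemma W_cons_ne (s a : ℝ) (ha : a ≠ 0) (l : List ℝ) :
    W s (a :: l) = (if s * a < 0 then 1 else 0) + W a l := by simp [W_cons, ha]

lemma W_filter (s : ℝ) (l : List ℝ) : W s (F l) = W s l := by
  induction l generalizing s with
  | nil => rfl
  | cons a l ih =>
    by_cases h : a = 0
    · subst h; rw [F_cons_zero, W_cons_zero, ih]
    · rw [F_cons_ne a h, W_cons_ne _ _ h, W_cons_ne _ _ h, ih]

lemma zc_cons_eq_W (a : ℝ) (m : List ℝ) (hm : ∀ x ∈ m, x ≠ 0) :
    zc (a :: m) = W a m := by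
  induction m generalizing a with
  | nil => rfl
  | cons b m ih =>
    have hb : b ≠ 0 := hm b (by simp)
    rw [zc_cons_cons, W_cons_ne _ _ hb, ih b (fun x hx => hm x (by simp [hx]))]

lemma sv_cons_zero (l : List ℝ) : sv ((0:ℝ) :: l) = sv l := by
  simp [sv, F_cons_zero]

lemma sv_cons_ne (a : ℝ) (ha : a ≠ 0) (l : List ℝ) : sv (a :: l) = W a l := by
  rw [sv, F_cons_ne a ha, zc_cons_eq_W _ _ (F_mem_ne l), W_filter]


lemma sgn_pp {s a b : ℝ} (h1 : 0 < s * a) (h2 : 0 < s * b) : 0 < a * b := by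
  nlinarith [mul_pos h1 h2, sq_nonneg s]

lemma sgn_nn {s a b : ℝ} (h1 : s * a < 0) (h2 : s * b < 0) : 0 < a * b := by
  nlinarith [mul_pos_of_neg_of_neg h1 h2, sq_nonneg s]

lemma sgn_pn {s a b : ℝ} (h1 : 0 < s * a) (h2 : s * b < 0) : a * b < 0 := by
  nlinarith [mul_neg_of_pos_of_neg h1 h2, sq_nonneg s]

lemma mul_tricho {s a : ℝ} (hs : s ≠ 0) (ha : a ≠ 0) : s * a < 0 ∨ 0 < s * a :=
  (mul_ne_zero hs ha).lt_or_gt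

lemma del_key {a b x : ℝ} (hx : x ≠ 0) (hab : a * b < 0) : a * x < 0 ∨ x * b < 0 := by
  by_cases h : a * x < 0
  · exact Or.inl h
  · right
    nlinarith [mul_self_pos.mpr hx, not_lt.mp h]

noncomputable def paux (c : ℝ) : List ℝ → List ℝ
  | [] => [c]
  | b :: l => (c + b) :: paux b l

@[simp] lemma paux_nil (c : ℝ) : paux c [] = [c] := rfl
@[simp] lemma paux_cons (c b : ℝ) (l : List ℝ) : paux c (b :: l) = (c + b) :: paux b l := rfl

noncomputable def pairsum : List ℝ → List ℝ
  | [] => []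
  | a :: l => a :: paux a l

@[simp] lemma pairsum_nil : pairsum [] = [] := rfl
@[simp] lemma pairsum_cons (a : ℝ) (l : List ℝ) : pairsum (a :: l) = a :: paux a l := rfl

/-- Key invariant: processing with carry `c` compatible with current p-sign `s`,
    current q-sign `u`. -/
lemma inv : ∀ (l : List ℝ) (s u c : ℝ), s ≠ 0 → u ≠ 0 → 0 ≤ c * s →
    W u (paux c l) ≤ W s l + (if 0 < s * u then 0 else 1) := by
  intro l
  induction l with
  | nil =>
    intro s u c hs hu hc
    by_cases hc0 : c = 0
    · subst hc0; simp [W_cons_zero]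
    · have hcs : 0 < c * s := lt_of_le_of_ne hc (Ne.symm (mul_ne_zero hc0 hs))
      rw [paux_nil, W_cons_ne _ _ hc0, W_nil, W_nil, add_zero, zero_add]
      by_cases hsu : 0 < s * u
      · have : 0 < u * c := sgn_pp (a := u) (b := c) (s := s) (by linarith [mul_comm s u]) (by linarith [mul_comm c s])
        simp [hsu, not_lt.mpr (le_of_lt this)]
      · simp [hsu]
        split_ifs <;> omega
  | cons b l ih =>
    intro s u c hs hu hc
    rw [paux_cons]
    by_cases hb : b = 0
    · subst hb
      rw [add_zero, W_cons_zero]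
      by_cases hc0 : c = 0
      · subst hc0
        rw [W_cons_zero]
        exact ih s u 0 hs hu (by simp)
      · have hcs : 0 < c * s := lt_of_le_of_ne hc (Ne.symm (mul_ne_zero hc0 hs))
        rw [W_cons_ne _ _ hc0]
        have h2 := ih s c 0 hs hc0 (by simp)
        have hsc : 0 < s * c := by linarith [mul_comm c s]
        rw [if_pos hsc] at h2
        by_cases hsu : 0 < s * u
        · have : 0 < u * c := sgn_pp (a := u) (b := c) (s := s) (by linarith [mul_comm s u]) hsc
          rw [if_neg (not_lt.mpr (le_of_lt this)), if_pos hsu]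
          omega
        · rw [if_neg hsu]
          split_ifs <;> omega
    · rw [W_cons_ne _ _ hb]
      rcases mul_tricho hs hb with hsb | hsb
      · -- sign change in p : s*b < 0
        rw [if_pos hsb]
        by_cases he : c + b = 0
        · rw [he, W_cons_zero]
          have h2 := ih b u b hb hu (le_of_lt (mul_self_pos.mpr hb))
          split_ifs at h2 ⊢ <;> omega
        · rw [W_cons_ne _ _ he]
          have h2 := ih b (c + b) b hb he (le_of_lt (mul_self_pos.mpr hb))
          by_cases hsu : 0 < s * u
          · rw [if_pos hsu]
            by_cases hbe : 0 < b * (c + b)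
            · rw [if_pos hbe] at h2
              -- u*(c+b) : u ~ s, c+b ~ b ~ -s so u*(c+b) < 0 possible; bound 1
              split_ifs <;> omega
            · rw [if_neg hbe] at h2
              have hbe' : b * (c + b) < 0 := (mul_tricho hb he).resolve_right hbe
              -- then c+b ~ s-sign? b ~ -s, so c+b ~ s : u*(c+b) > 0
              have h3 : 0 < u * (c + b) := by
                have hus : 0 < u * s := by linarith [mul_comm s u]
                have h4 : s * (c + b) > 0 := sgn_nn (s := b) (a := s) (b := (c+b)) (by linarith [mul_comm s b]) hbe'
                exact sgn_pp (s := s) (by linarith [mul_comm u s]) h4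
              rw [if_neg (not_lt.mpr (le_of_lt h3))]
              omega
          · rw [if_neg hsu]
            split_ifs at h2 ⊢ <;> omega
      · -- no sign change : s*b > 0
        rw [if_neg (not_lt.mpr (le_of_lt hsb))]
        have hes : 0 < (c + b) * s := by
          have : 0 < b * s := by linarith [mul_comm s b]
          nlinarith
        have he : c + b ≠ 0 := by
          intro h; rw [h] at hes; simp at hes
        rw [W_cons_ne _ _ he]
        have h2 := ih b (c + b) b hb he (le_of_lt (mul_self_pos.mpr hb))
        have hbe : 0 < b * (c + b) :=
          sgn_pp (s := s) (a := b) (b := c + b) hsb (by linarith [mul_comm (c+b) s])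
        rw [if_pos hbe] at h2
        by_cases hsu : 0 < s * u
        · rw [if_pos hsu]
          have h3 : 0 < u * (c + b) :=
            sgn_pp (s := s) (a := u) (b := c + b) (by linarith [mul_comm s u]) (by linarith [mul_comm (c+b) s])
          rw [if_neg (not_lt.mpr (le_of_lt h3))]
          omega
        · rw [if_neg hsu]
          split_ifs <;> omega

lemma sv_pairsum (l : List ℝ) : sv (pairsum l) ≤ sv l := by
  induction l with
  | nil => simp [sv]
  | cons a l ih =>
    by_cases ha : a = 0
    · subst ha
      rw [pairsum_cons, sv_cons_zero, sv_cons_zero]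
      cases l with
      | nil => simp [sv, F, List.filter_cons]
      | cons b r =>
        rw [paux_cons, zero_add]
        rw [pairsum_cons] at ih
        exact ih
    · rw [pairsum_cons, sv_cons_ne _ ha, sv_cons_ne _ ha]
      have h := inv l a a a ha ha (le_of_lt (mul_self_pos.mpr ha))
      rw [if_pos (mul_self_pos.mpr ha)] at h
      omega

lemma zc_insert (x : ℝ) (m₂ : List ℝ) : ∀ m₁ : List ℝ, zc (m₁ ++ x :: m₂) ≤ zc (m₁ ++ m₂) + 2
  | [] => by
      cases m₂ with
      | nil => simp
      | cons b r => simp only [List.nil_append, zc_cons_cons]; split_ifs <;> omega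
  | [a] => by
      cases m₂ with
      | nil => simp only [List.cons_append, List.nil_append, zc_cons_cons, zc_single]
               split_ifs <;> omega
      | cons b r =>
          simp only [List.cons_append, List.nil_append, zc_cons_cons]
          split_ifs <;> omega
  | a :: b :: r => by
      have h := zc_insert x m₂ (b :: r)
      simp only [List.cons_append, zc_cons_cons] at h ⊢
      omega

lemma zc_delete (x : ℝ) (hx : x ≠ 0) (m₂ : List ℝ) :
    ∀ m₁ : List ℝ, zc (m₁ ++ m₂) ≤ zc (m₁ ++ x :: m₂)
  | [] => by
      cases m₂ with
      | nil => simp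
      | cons b r => simp only [List.nil_append, zc_cons_cons]; split_ifs <;> omega
  | [a] => by
      cases m₂ with
      | nil => simp
      | cons b r =>
          simp only [List.cons_append, List.nil_append, zc_cons_cons]
          split_ifs with h1 h2 h3 h2 h3 h3
          all_goals try omega
          all_goals (exfalso; rcases del_key hx h1 with h | h <;> simp_all)
  | a :: b :: r => by
      have h := zc_delete x hx m₂ (b :: r)
      simp only [List.cons_append, zc_cons_cons] at h ⊢
      omega

lemma F_append (l₁ l₂ : List ℝ) : F (l₁ ++ l₂) = F l₁ ++ F l₂ := by
  simp [F, List.filter_append]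

lemma sv_insert (u w : List ℝ) (x : ℝ) : sv (u ++ x :: w) ≤ sv (u ++ w) + 2 := by
  by_cases hx : x = 0
  · subst hx
    have : F (u ++ (0:ℝ) :: w) = F (u ++ w) := by
      rw [F_append, F_append, F_cons_zero]
    rw [sv, sv, this]; omega
  · rw [sv, sv, F_append, F_append, F_cons_ne _ hx]
    exact zc_insert x (F w) (F u)

lemma sv_delete (u w : List ℝ) (x : ℝ) : sv (u ++ w) ≤ sv (u ++ x :: w) := by
  by_cases hx : x = 0
  · subst hx
    have : F (u ++ (0:ℝ) :: w) = F (u ++ w) := by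
      rw [F_append, F_append, F_cons_zero]
    rw [sv, sv, this]
  · rw [sv, sv, F_append, F_append, F_cons_ne _ hx]
    exact zc_delete x hx (F w) (F u)

lemma sv_change (u w : List ℝ) (x y : ℝ) : sv (u ++ x :: w) ≤ sv (u ++ y :: w) + 2 :=
  le_trans (sv_insert u w x) (by have := sv_delete u w y; omega)


open Polynomial

noncomputable def signVar' (p : Polynomial ℝ) : ℕ :=
  let l := (((List.range (p.natDegree + 1)).map fun i => p.coeff i).filter fun a => a ≠ 0)
  (l.zip l.tail).countP fun q => q.1 * q.2 < 0

noncomputable def clist (p : Polynomial ℝ) (n : ℕ) : List ℝ :=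
  (List.range n).map fun i => p.coeff i

lemma F_clist_zeros (p : Polynomial ℝ) {n m : ℕ} (hn : p.natDegree < n) (hm : n ≤ m) :
    F (clist p m) = F (clist p n) := by
  have : m = n + (m - n) := by omega
  rw [this]
  unfold clist
  rw [List.range_add, List.map_append, F_append]
  have : F ((List.map (fun x => n + x) (List.range (m - n))).map fun i => p.coeff i) = [] := by
    rw [List.map_map]
    apply List.filter_eq_nil_iff.mpr
    intro a ha
    simp only [List.mem_map, List.mem_range, Function.comp] at ha
    obtain ⟨i, _, rfl⟩ := ha
    have : p.coeff (n + i) = 0 := coeff_eq_zero_of_natDegree_lt (by omega)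
    simp [this]
  rw [this, List.append_nil]

lemma signVar'_eq_sv (p : Polynomial ℝ) {n : ℕ} (hn : p.natDegree < n) :
    signVar' p = sv (clist p n) := by
  have h1 : signVar' p = sv (clist p (p.natDegree + 1)) := by
    rw [signVar']
    exact zc_eq _
  rw [h1, sv, sv]
  exact congrArg zc (F_clist_zeros p (Nat.lt_succ_self _) hn).symm

lemma zipWith_add_map (l : List ℕ) (f g : ℕ → ℝ) :
    List.zipWith (· + ·) (l.map f) (l.map g) = l.map fun i => f i + g i := by
  induction l with
  | nil => rfl
  | cons a l ih => simp [ih]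

lemma paux_zip (l : List ℝ) (c : ℝ) : paux c l = List.zipWith (· + ·) (c :: l) (l ++ [0]) := by
  induction l generalizing c with
  | nil => simp
  | cons b r ih => simp [ih]

lemma clist_succ (p : Polynomial ℝ) (n : ℕ) :
    clist p (n + 1) = clist p n ++ [p.coeff n] := by
  unfold clist; rw [List.range_succ, List.map_append]; rfl

lemma clist_X_mul (p : Polynomial ℝ) (n : ℕ) :
    clist (X * p) (n + 1) = 0 :: clist p n := by
  unfold clist
  rw [List.range_succ_eq_map, List.map_cons, List.map_map]
  congr 1
  · simp
  · apply List.map_congr_left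
    intro i _
    simp [coeff_X_mul]

lemma signVar'_X1_mul (p : Polynomial ℝ) : signVar' ((X + 1) * p) ≤ signVar' p := by
  obtain ⟨n, hn⟩ : ∃ n, n = p.natDegree + 1 := ⟨_, rfl⟩
  have hdeg : ((X + 1 : Polynomial ℝ) * p).natDegree < n + 1 := by
    have h1 : ((X + 1 : Polynomial ℝ) * p).natDegree ≤ (X + 1 : Polynomial ℝ).natDegree + p.natDegree :=
      natDegree_mul_le
    have h2 : (X + 1 : Polynomial ℝ).natDegree ≤ 1 := by
      compute_degree
    omega
  rw [signVar'_eq_sv ((X+1)*p) hdeg, signVar'_eq_sv p (show p.natDegree < n by omega)]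
  have key : clist ((X + 1) * p) (n + 1) = pairsum (clist p n) := by
    have e0 : (X + 1 : Polynomial ℝ) * p = X * p + p := by ring
    have e3 : clist ((X + 1) * p) (n + 1)
        = List.zipWith (· + ·) (clist (X * p) (n + 1)) (clist p (n + 1)) := by
      rw [e0]
      unfold clist
      rw [zipWith_add_map]
      apply List.map_congr_left
      intro i _
      simp [coeff_add]
    have e4 : clist p (n + 1) = clist p n ++ [(0:ℝ)] := by
      rw [clist_succ, coeff_eq_zero_of_natDegree_lt (show p.natDegree < n by omega)]
    rw [e3, clist_X_mul, e4]
    cases hc : clist p n with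
    | nil =>
      exfalso
      have : (clist p n).length = n := by simp [clist]
      rw [hc] at this
      simp at this
      omega
    | cons a l =>
      rw [pairsum_cons, paux_zip]
      simp
  rw [key]
  exact sv_pairsum _

lemma signVar'_X1_pow_mul (k : ℕ) (p : Polynomial ℝ) :
    signVar' ((X + 1) ^ k * p) ≤ signVar' p := by
  induction k generalizing p with
  | zero => simp
  | succ k ih =>
    have : (X + 1 : Polynomial ℝ) ^ (k + 1) * p = (X + 1) ^ k * ((X + 1) * p) := by ring
    rw [this]
    exact le_trans (ih ((X + 1) * p)) (signVar'_X1_mul p)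


lemma clist_split (p : Polynomial ℝ) {n d : ℕ} (hd : d < n) :
    clist p n = clist p d ++ p.coeff d ::
      ((List.range (n - d - 1)).map fun j => p.coeff (d + 1 + j)) := by
  obtain ⟨k, hk⟩ : ∃ k, k = n - d - 1 := ⟨_, rfl⟩
  rw [← hk]
  have h : n = (d + 1) + k := by omega
  rw [h]
  unfold clist
  rw [List.range_add, List.map_append, List.range_succ, List.map_append, List.map_map]
  simp [Function.comp]

lemma signVar'_add_single (h : Polynomial ℝ) (c : ℝ) (d : ℕ) :
    signVar' (h + C c * X ^ d) ≤ signVar' h + 2 := by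
  obtain ⟨n, hn⟩ : ∃ n, n = h.natDegree + (h + C c * X ^ d).natDegree + d + 1 := ⟨_, rfl⟩
  have h1 : h.natDegree < n := by omega
  have h2 : (h + C c * X ^ d).natDegree < n := by omega
  have h3 : d < n := by omega
  rw [signVar'_eq_sv _ h2, signVar'_eq_sv h h1, clist_split _ h3, clist_split h h3]
  have hcoeff : ∀ i, i ≠ d → (h + C c * X ^ d).coeff i = h.coeff i := by
    intro i hi
    simp [coeff_add, coeff_C_mul, coeff_X_pow, hi]
  have hu : clist (h + C c * X ^ d) d = clist h d := by
    unfold clist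
    apply List.map_congr_left
    intro i hi
    exact hcoeff i (by simp at hi; omega)
  have hw : ((List.range (n - d - 1)).map fun j => (h + C c * X ^ d).coeff (d + 1 + j))
      = (List.range (n - d - 1)).map fun j => h.coeff (d + 1 + j) := by
    apply List.map_congr_left
    intro j _
    exact hcoeff _ (by omega)
  rw [hu, hw]
  exact sv_change _ _ _ _

lemma term_coeff_nonneg (a b : ℕ) : ∀ i, 0 ≤ (X ^ a * (X + 1) ^ b : Polynomial ℝ).coeff i := by
  intro i
  rw [coeff_mul]
  apply Finset.sum_nonneg
  intro x _
  apply mul_nonneg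
  · rw [coeff_X_pow]
    split_ifs <;> norm_num
  · rw [coeff_X_add_one_pow]
    positivity

lemma signVar'_term (c : ℝ) (a b : ℕ) : signVar' (C c * X ^ a * (X + 1) ^ b) = 0 := by
  rw [signVar']
  apply List.countP_eq_zero.mpr
  intro q hq
  obtain ⟨h1, h2⟩ := List.of_mem_zip (show (q.1, q.2) ∈ _ from by simpa using hq)
  replace h1 := List.mem_of_mem_filter h1
  replace h2 := List.mem_of_mem_filter (List.mem_of_mem_tail h2)
  simp only [List.mem_map, List.mem_range] at h1 h2
  obtain ⟨i, _, hi⟩ := h1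
  obtain ⟨j, _, hj⟩ := h2
  have hfac : ∀ k : ℕ, (C c * X ^ a * (X + 1) ^ b : Polynomial ℝ).coeff k
      = c * (X ^ a * (X + 1) ^ b : Polynomial ℝ).coeff k := by
    intro k; rw [mul_assoc, coeff_C_mul]
  simp only [decide_eq_true_eq]
  rw [← hi, ← hj, hfac, hfac]
  intro habs
  nlinarith [mul_nonneg (term_coeff_nonneg a b i) (term_coeff_nonneg a b j), sq_nonneg c]

lemma key : ∀ (n : ℕ) (S : Finset ((Fin 2) →₀ ℕ)) (b : ((Fin 2) →₀ ℕ) → ℕ)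
    (c : ((Fin 2) →₀ ℕ) → ℝ), S.card = n → S.Nonempty →
    signVar' (∑ m ∈ S, C (c m) * X ^ (m 0) * (X + 1) ^ (b m)) ≤ 2 * n - 2 := by
  intro n
  induction n with
  | zero =>
    intro S b c hcard hne
    exact absurd (Finset.card_eq_zero.mp hcard) (Finset.nonempty_iff_ne_empty.mp hne)
  | succ n ih =>
    intro S b c hcard hne
    by_cases hn0 : n = 0
    · subst hn0
      obtain ⟨m, rfl⟩ := Finset.card_eq_one.mp hcard
      rw [Finset.sum_singleton, signVar'_term]
    · obtain ⟨i0, hi0S, hi0min⟩ := Finset.exists_min_image S b hne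
      have hfactor : (∑ m ∈ S, C (c m) * X ^ (m 0) * (X + 1) ^ (b m))
          = (X + 1) ^ (b i0) * ∑ m ∈ S, C (c m) * X ^ (m 0) * (X + 1) ^ (b m - b i0) := by
        rw [Finset.mul_sum]
        apply Finset.sum_congr rfl
        intro m hm
        rw [show (X + 1 : Polynomial ℝ) ^ (b m)
            = (X + 1) ^ (b i0) * (X + 1) ^ (b m - b i0) by
          rw [← pow_add, Nat.add_sub_cancel' (hi0min m hm)]]
        ring
      rw [hfactor]
      refine le_trans (signVar'_X1_pow_mul _ _) ?_
      have hsplit : (∑ m ∈ S, C (c m) * X ^ (m 0) * (X + 1) ^ (b m - b i0))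
          = (∑ m ∈ S.erase i0, C (c m) * X ^ (m 0) * (X + 1) ^ (b m - b i0))
            + C (c i0) * X ^ (i0 0) := by
        rw [← Finset.sum_erase_add S _ hi0S, Nat.sub_self, pow_zero, mul_one]
      rw [hsplit]
      refine le_trans (signVar'_add_single _ _ _) ?_
      have hcard' : (S.erase i0).card = n := by
        rw [Finset.card_erase_of_mem hi0S, hcard]; omega
      have hne' : (S.erase i0).Nonempty := Finset.card_pos.mp (by omega)
      have := ih (S.erase i0) (fun m => b m - b i0) c hcard' hne'
      beta_reduce at this
      omega

lemma subXX1_eq' (f : MvPolynomial (Fin 2) ℝ) :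
    MvPolynomial.aeval (![Polynomial.X, Polynomial.X + 1] : Fin 2 → Polynomial ℝ) f
      = ∑ m ∈ f.support, C (MvPolynomial.coeff m f) * X ^ (m 0) * (X + 1) ^ (m 1) := by
  conv_lhs => rw [f.as_sum]
  rw [map_sum]
  apply Finset.sum_congr rfl
  intro m _
  rw [MvPolynomial.aeval_monomial]
  have hprod : (m.prod fun i e => ((![Polynomial.X, Polynomial.X + 1] : Fin 2 → Polynomial ℝ) i) ^ e)
      = X ^ (m 0) * (X + 1) ^ (m 1) := by
    rw [Finsupp.prod_fintype _ _ (fun i => pow_zero _), Fin.prod_univ_two]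
    simp
  rw [hprod]
  simp [algebraMap_eq]
  ring

end SVaux

theorem stmt3 (f : MvPolynomial (Fin 2) ℝ) (t : ℕ) (hf : f ≠ 0)
    (ht : f.support.card ≤ t) :
    (signVar (subXX1 f) : ℤ) ≤ 2 * t - 2 := by
  classical
  have hne : f.support.Nonempty := MvPolynomial.support_nonempty.mpr hf
  have hcard : 1 ≤ f.support.card := Finset.card_pos.mpr hne
  have hkey := SVaux.key f.support.card f.support (fun m => m 1)
    (fun m => MvPolynomial.coeff m f) rfl hne
  beta_reduce at hkey
  have hsv : signVar (subXX1 f) = SVaux.signVar' (subXX1 f) := rfl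
  have heq : subXX1 f
      = ∑ m ∈ f.support, Polynomial.C (MvPolynomial.coeff m f) * Polynomial.X ^ (m 0)
          * (Polynomial.X + 1) ^ (m 1) := SVaux.subXX1_eq' f
  rw [hsv, heq]
  omega
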